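/- If F is a finite IP-set of length n and F = F₁ ∪ F₂, then one of F₁, F₂ contains a finite IP-set of length l(n), where l(n) → ∞ as n → ∞. Consequently, the family of sets containing arbitrarily long finite IP-sets has the Ramsey property. -/

import Mathlib

/-- The finite IP-set generated by `p : Fin n → ℕ`. -/
def FSfin {n : ℕ} (p : Fin n → ℕ) : Set ℕ :=
  {m : ℕ | ∃ α : Finset (Fin n), α.Nonempty ∧ m = ∑ i ∈ α, p i}

/-- The family of subsets of ℕ containing finite IP-sets of arbitrarily long length. -/
def Ffip : Set (Set ℕ) :=
  {F : Set ℕ | ∀ n : ℕ, ∃ p : Fin n → ℕ, (∀ i, 0 < p i) ∧ FSfin p ⊆ F}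

namespace FipAux
open Finset


def bits (n : ℕ) : Finset ℕ := n.bitIndices.toFinset
lemma sum_bits (n : ℕ) : ∑ i ∈ bits n, 2^i = n := Finset.twoPowSum_toFinset_bitIndices n
lemma bits_sum (s : Finset ℕ) : bits (∑ i ∈ s, 2^i) = s := Finset.toFinset_bitIndices_twoPowSum s
lemma bits_nonempty {n : ℕ} (hn : 0 < n) : (bits n).Nonempty := by
  rcases (bits n).eq_empty_or_nonempty with h | h
  · have := sum_bits n; rw [h, Finset.sum_empty] at this; omega
  · exact h
lemma mem_bits_le {n u : ℕ} (hu : u ∈ bits n) : 2^u ≤ n := by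
  conv_rhs => rw [← sum_bits n]
  exact Finset.single_le_sum (f := fun i => 2^i) (fun i _ => Nat.zero_le _) hu
lemma le_of_mem_bits_of_dvd {k n u : ℕ} (h : 2^k ∣ n) (hu : u ∈ bits n) : k ≤ u := by
  obtain ⟨m, rfl⟩ := h
  unfold bits at hu
  rw [Nat.bitIndices_two_pow_mul] at hu
  simp only [List.mem_toFinset, List.mem_map] at hu
  obtain ⟨x, -, rfl⟩ := hu
  omega
lemma FS_pos : ∀ {b : Stream' ℕ} {m : ℕ}, m ∈ Hindman.FS b → (∀ i, 0 < b.get i) → 0 < m := by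
  intro b m hm
  induction hm with
  | head' a => intro hb; exact hb 0
  | tail' a m h ih => intro hb; exact ih fun i => hb (i + 1)
  | cons' a m h ih => intro hb; have := ih fun i => hb (i + 1); have h0 := hb 0; omega

/-- Infinite finite-unions theorem: any 2-colouring of finsets admits, for each `L`, a family of
`L` pairwise disjoint nonempty finsets all of whose nonempty unions get the same colour. -/
lemma exists_mono_union_family (L : ℕ) (χ : Finset ℕ → Bool) :
    ∃ t : Bool, ∃ β : Fin L → Finset ℕ,
      (∀ j, (β j).Nonempty) ∧
      (∀ j j', j ≠ j' → Disjoint (β j) (β j')) ∧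
      (∀ S : Finset (Fin L), S.Nonempty → χ (S.biUnion β) = t) := by
  classical
  set a : Stream' ℕ := fun n => 2^n with ha
  have hapos : ∀ i, 0 < a.get i := fun i => (Nat.pow_pos (by norm_num : 0 < 2) : 0 < 2^i)
  set C : Bool → Set ℕ := fun t => {m | 0 < m ∧ χ (bits m) = t} with hC
  obtain ⟨c, hc, b, hbc⟩ := Hindman.FS_partition_regular a {C true, C false}
    ((Set.finite_singleton _).insert _)
    (by
      intro m hm
      have hmpos : 0 < m := FS_pos hm hapos
      rcases Bool.eq_false_or_eq_true (χ (bits m)) with h | h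
      · exact ⟨C true, by simp, hmpos, h⟩
      · exact ⟨C false, by simp, hmpos, h⟩)
  obtain ⟨t, rfl⟩ : ∃ t, c = C t := by
    rcases hc with h | h
    · exact ⟨true, h⟩
    · exact ⟨false, by simpa using h⟩
  have hkey : ∀ s : Finset ℕ, s.Nonempty →
      0 < (∑ i ∈ s, b.get i) ∧ χ (bits (∑ i ∈ s, b.get i)) = t :=
    fun s hs => hbc (Hindman.FS.finset_sum b s hs)
  -- build the blocks by induction
  have main : ∀ J : ℕ, ∃ x : Fin J → ℕ, ∃ I : Fin J → Finset ℕ,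
      (∀ j, (I j).Nonempty) ∧
      (∀ j, x j = ∑ i ∈ I j, b.get i) ∧
      (∀ j j' : Fin J, j < j' → ∀ u ∈ I j, ∀ v ∈ I j', u < v) ∧
      (∀ j j' : Fin J, j < j' → ∀ u ∈ bits (x j), ∀ v ∈ bits (x j'), u < v) := by
    intro J
    induction J with
    | zero =>
        exact ⟨Fin.elim0, Fin.elim0, fun j => j.elim0, fun j => j.elim0,
          fun j => j.elim0, fun j => j.elim0⟩
    | succ J ih =>
        obtain ⟨x, I, hIne, hxI, hIord, hbord⟩ := ih
        set N : ℕ := (Finset.univ.biUnion I).sup id + 1 with hN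
        set k : ℕ := (∑ j, x j) + 1 with hk
        have hIbound : ∀ (j : Fin J), ∀ u ∈ I j, u < N := by
          intro j u hu
          have : u ≤ (Finset.univ.biUnion I).sup id :=
            Finset.le_sup (f := id) (Finset.mem_biUnion.2 ⟨j, Finset.mem_univ j, hu⟩)
          omega
        have hbits_lt : ∀ (j : Fin J), ∀ u ∈ bits (x j), u < k := by
          intro j u hu
          have h1 : 2^u ≤ x j := mem_bits_le hu
          have hxsum : x j ≤ ∑ j', x j' :=
            Finset.single_le_sum (fun i _ => Nat.zero_le _) (Finset.mem_univ j)
          have h2 : (∑ j', x j') < 2^k := lt_of_lt_of_le (by omega) (Nat.le_of_lt (Nat.lt_two_pow_self (n := k)))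
          have hu2 : (2:ℕ)^u < 2^k := by omega
          exact (Nat.pow_lt_pow_iff_right (by norm_num)).1 hu2
        -- pigeonhole for a block sum divisible by 2^k
        set T : ℕ → ℕ := fun m => ∑ i ∈ Finset.Ico N (N + m), b.get i with hT
        obtain ⟨m, m', hlt, heq⟩ : ∃ m m', m < m' ∧ T m % 2^k = T m' % 2^k := by
          obtain ⟨m, hm, m', hm', hne, heq⟩ :
              ∃ m ∈ Finset.range (2^k + 1), ∃ m' ∈ Finset.range (2^k + 1),
                m ≠ m' ∧ T m % 2^k = T m' % 2^k := by
            apply Finset.exists_ne_map_eq_of_card_lt_of_maps_to (t := Finset.range (2^k))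
            · simp
            · intro m _
              exact Finset.mem_range.2 (Nat.mod_lt _ (Nat.pow_pos (by norm_num : 0 < 2) : 0 < 2^k))
          rcases Ne.lt_or_gt hne with h | h
          · exact ⟨m, m', h, heq⟩
          · exact ⟨m', m, h, heq.symm⟩
        set y : ℕ := ∑ i ∈ Finset.Ico (N + m) (N + m'), b.get i with hy
        have hblock_ne : (Finset.Ico (N + m) (N + m')).Nonempty := by
          rw [Finset.nonempty_Ico]; omega
        have hysum : T m + y = T m' := by
          show (∑ i ∈ Finset.Ico N (N + m), b.get i) + (∑ i ∈ Finset.Ico (N + m) (N + m'), b.get i)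
            = ∑ i ∈ Finset.Ico N (N + m'), b.get i
          exact Finset.sum_Ico_consecutive _ (by omega) (by omega)
        have hdvd : 2^k ∣ y := by
          have hmod : T m + y ≡ T m + 0 [MOD 2^k] := by
            unfold Nat.ModEq
            rw [Nat.add_zero, hysum]
            exact heq.symm
          exact Nat.modEq_zero_iff_dvd.1 (Nat.ModEq.add_left_cancel' _ hmod)
        have hypos : 0 < y := (hkey _ hblock_ne).1
        have hybits : ∀ v ∈ bits y, k ≤ v := fun v hv => le_of_mem_bits_of_dvd hdvd hv
        refine ⟨Fin.snoc x y, Fin.snoc I (Finset.Ico (N + m) (N + m')), ?_, ?_, ?_, ?_⟩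
        · intro j
          refine Fin.lastCases ?_ ?_ j
          · rw [Fin.snoc_last]; exact hblock_ne
          · intro j0; rw [Fin.snoc_castSucc]; exact hIne j0
        · intro j
          refine Fin.lastCases ?_ ?_ j
          · rw [Fin.snoc_last, Fin.snoc_last]
          · intro j0; rw [Fin.snoc_castSucc, Fin.snoc_castSucc]; exact hxI j0
        · intro j j' hjj u hu v hv
          rcases Fin.eq_castSucc_or_eq_last j' with ⟨j1, rfl⟩ | rfl
          · obtain ⟨j0, rfl⟩ : ∃ j0 : Fin J, j = j0.castSucc := by
              refine ⟨⟨j.1, ?_⟩, ?_⟩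
              · have := j1.2; have h2 : j.1 < j1.1 := hjj; omega
              · apply Fin.ext; rfl
            rw [Fin.snoc_castSucc] at hu hv
            exact hIord j0 j1 (by exact_mod_cast hjj) u hu v hv
          · rw [Fin.snoc_last] at hv
            obtain ⟨j0, rfl⟩ : ∃ j0 : Fin J, j = j0.castSucc := by
              refine ⟨⟨j.1, ?_⟩, ?_⟩
              · have h2 : j.1 < J := hjj; omega
              · apply Fin.ext; rfl
            rw [Fin.snoc_castSucc] at hu
            have h1 : u < N := hIbound j0 u hu
            have h2 : N + m ≤ v := (Finset.mem_Ico.1 hv).1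
            omega
        · intro j j' hjj u hu v hv
          rcases Fin.eq_castSucc_or_eq_last j' with ⟨j1, rfl⟩ | rfl
          · obtain ⟨j0, rfl⟩ : ∃ j0 : Fin J, j = j0.castSucc := by
              refine ⟨⟨j.1, ?_⟩, ?_⟩
              · have := j1.2; have h2 : j.1 < j1.1 := hjj; omega
              · apply Fin.ext; rfl
            rw [Fin.snoc_castSucc] at hu hv
            exact hbord j0 j1 (by exact_mod_cast hjj) u hu v hv
          · rw [Fin.snoc_last] at hv
            obtain ⟨j0, rfl⟩ : ∃ j0 : Fin J, j = j0.castSucc := by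
              refine ⟨⟨j.1, ?_⟩, ?_⟩
              · have h2 : j.1 < J := hjj; omega
              · apply Fin.ext; rfl
            rw [Fin.snoc_castSucc] at hu
            have h1 : u < k := hbits_lt j0 u hu
            have h2 : k ≤ v := hybits v hv
            omega
  -- conclude
  obtain ⟨x, I, hIne, hxI, hIord, hbord⟩ := main L
  have hxpos : ∀ j, 0 < x j := fun j => by rw [hxI j]; exact (hkey _ (hIne j)).1
  have hdisjB : ∀ j j' : Fin L, j ≠ j' → Disjoint (bits (x j)) (bits (x j')) := by
    intro j j' hne
    rw [Finset.disjoint_left]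
    intro u hu hu'
    rcases Ne.lt_or_gt hne with h | h
    · exact absurd (hbord j j' h u hu u hu') (lt_irrefl u)
    · exact absurd (hbord j' j h u hu' u hu) (lt_irrefl u)
  refine ⟨t, fun j => bits (x j), fun j => bits_nonempty (hxpos j), hdisjB, ?_⟩
  intro S hS
  have hdisjI : (↑S : Set (Fin L)).PairwiseDisjoint I := by
    intro j _ j' _ hne
    show Disjoint (I j) (I j')
    rw [Finset.disjoint_left]
    intro u hu hu'
    rcases Ne.lt_or_gt hne with h | h
    · exact absurd (hIord j j' h u hu u hu') (lt_irrefl u)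
    · exact absurd (hIord j' j h u hu' u hu) (lt_irrefl u)
  have h1 : ∑ j ∈ S, x j = ∑ i ∈ S.biUnion I, b.get i := by
    rw [Finset.sum_biUnion hdisjI]
    exact Finset.sum_congr rfl fun j _ => hxI j
  have hBne : (S.biUnion I).Nonempty := by
    obtain ⟨j, hj⟩ := hS
    obtain ⟨u, hu⟩ := hIne j
    exact ⟨u, Finset.mem_biUnion.2 ⟨j, hj, hu⟩⟩
  have h2 := (hkey _ hBne).2
  rw [← h1] at h2
  have hdisjB' : (↑S : Set (Fin L)).PairwiseDisjoint (fun j => bits (x j)) :=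
    fun j _ j' _ hne => hdisjB j j' hne
  have h3 : ∑ j ∈ S, x j = ∑ u ∈ S.biUnion (fun j => bits (x j)), 2^u := by
    rw [Finset.sum_biUnion hdisjB']
    exact Finset.sum_congr rfl fun j _ => (sum_bits (x j)).symm
  rw [h3, bits_sum] at h2
  exact h2


/-- extension of a tuple by zero -/
def extend {n : ℕ} (p : Fin n → ℕ) : ℕ → ℕ := fun i => if h : i < n then p ⟨i, h⟩ else 0

lemma sum_attachFin {n : ℕ} (s : Finset ℕ) (h : ∀ m ∈ s, m < n) (f : Fin n → ℕ) :
    ∑ i ∈ s.attachFin h, f i = ∑ i ∈ s, extend f i := by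
  apply Finset.sum_bij (i := fun (a : Fin n) (_ : a ∈ s.attachFin h) => (a : ℕ))
  · intro a ha; exact (Finset.mem_attachFin h).1 ha
  · intro a _ a' _ hau; exact Fin.val_injective hau
  · intro c hc; exact ⟨⟨c, h c hc⟩, (Finset.mem_attachFin h).2 hc, rfl⟩
  · intro a ha
    unfold extend
    rw [dif_pos a.isLt]

def Good (L n : ℕ) : Prop := ∀ p : Fin n → ℕ, (∀ i, 0 < p i) → ∀ F₁ F₂ : Set ℕ,
  FSfin p = F₁ ∪ F₂ →
    (∃ q : Fin L → ℕ, (∀ i, 0 < q i) ∧ FSfin q ⊆ F₁) ∨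
    (∃ q : Fin L → ℕ, (∀ i, 0 < q i) ∧ FSfin q ⊆ F₂)

lemma good_zero (n : ℕ) : Good 0 n := by
  intro p hp F₁ F₂ hcov
  left
  refine ⟨fun i => i.elim0, fun i => i.elim0, ?_⟩
  rintro m ⟨α, hα, rfl⟩
  obtain ⟨i, -⟩ := hα
  exact i.elim0

lemma FSfin_castLE {L' L : ℕ} (h : L' ≤ L) (q : Fin L → ℕ) :
    FSfin (fun i => q (Fin.castLE h i)) ⊆ FSfin q := by
  rintro m ⟨α, hα, rfl⟩
  refine ⟨α.map (Fin.castLEEmb h), hα.map, ?_⟩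
  rw [Finset.sum_map]
  rfl

lemma good_mono {L n n' : ℕ} (h : n ≤ n') (hg : Good L n) : Good L n' := by
  intro p hp F₁ F₂ hcov
  set p₀ : Fin n → ℕ := fun i => p (Fin.castLE h i) with hp₀
  have hsub : FSfin p₀ ⊆ FSfin p := FSfin_castLE h p
  have hcov' : FSfin p₀ = (F₁ ∩ FSfin p₀) ∪ (F₂ ∩ FSfin p₀) := by
    ext m
    constructor
    · intro hm
      have hm2 : m ∈ F₁ ∪ F₂ := by rw [← hcov]; exact hsub hm
      rcases hm2 with h1 | h1
      · exact Or.inl ⟨h1, hm⟩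
      · exact Or.inr ⟨h1, hm⟩
    · rintro (⟨-, hm⟩ | ⟨-, hm⟩) <;> exact hm
  rcases hg p₀ (fun i => hp _) _ _ hcov' with ⟨q, hq, hsubq⟩ | ⟨q, hq, hsubq⟩
  · exact Or.inl ⟨q, hq, fun m hm => (hsubq hm).1⟩
  · exact Or.inr ⟨q, hq, fun m hm => (hsubq hm).1⟩

lemma exists_good (L : ℕ) : ∃ n : ℕ, Good L n := by
  classical
  by_contra hbad
  push_neg at hbad
  have hw : ∀ n : ℕ, ∃ p : Fin n → ℕ, ∃ F₁ F₂ : Set ℕ, (∀ i, 0 < p i) ∧ FSfin p = F₁ ∪ F₂ ∧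
      (∀ q : Fin L → ℕ, (∀ i, 0 < q i) → ¬ FSfin q ⊆ F₁) ∧
      (∀ q : Fin L → ℕ, (∀ i, 0 < q i) → ¬ FSfin q ⊆ F₂) := by
    intro n
    have h := hbad n
    unfold Good at h
    push_neg at h
    obtain ⟨p, hp, F₁, F₂, hcov, hA, hB⟩ := h
    exact ⟨p, F₁, F₂, hp, hcov, hA, hB⟩
  choose p F₁ F₂ hp hcov hA hB using hw
  set χn : ℕ → Finset ℕ → Bool :=
    fun n α => decide ((∑ i ∈ α, extend (p n) i) ∈ F₁ n) with hχn
  have claim : ∀ n : ℕ, ¬ ∃ (β : Fin L → Finset ℕ) (t : Bool),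
      (∀ j, (β j).Nonempty) ∧ (∀ j, ∀ u ∈ β j, u < n) ∧
      (∀ j j', j ≠ j' → Disjoint (β j) (β j')) ∧
      (∀ S : Finset (Fin L), S.Nonempty → χn n (S.biUnion β) = t) := by
    rintro n ⟨β, t, hne, hltn, hdisj, hmono⟩
    set q : Fin L → ℕ := fun j => ∑ i ∈ β j, extend (p n) i with hq
    have hqpos : ∀ j, 0 < q j := by
      intro j
      apply Finset.sum_pos ?_ (hne j)
      intro i hi
      have hin : i < n := hltn j i hi
      show 0 < extend (p n) i
      unfold extend
      rw [dif_pos hin]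
      exact hp n _
    have hsum : ∀ S : Finset (Fin L),
        ∑ j ∈ S, q j = ∑ i ∈ S.biUnion β, extend (p n) i := by
      intro S
      rw [Finset.sum_biUnion]
      intro j _ j' _ hjj
      show Disjoint (β j) (β j')
      exact hdisj j j' hjj
    have hltB : ∀ S : Finset (Fin L), ∀ u ∈ S.biUnion β, u < n := by
      intro S u hu
      obtain ⟨j, -, hj⟩ := Finset.mem_biUnion.1 hu
      exact hltn j u hj
    have hmem : ∀ S : Finset (Fin L), S.Nonempty → (∑ j ∈ S, q j) ∈ FSfin (p n) := by
      intro S hS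
      refine ⟨(S.biUnion β).attachFin (hltB S), ?_, ?_⟩
      · obtain ⟨j, hj⟩ := hS
        obtain ⟨u, hu⟩ := hne j
        exact ⟨⟨u, hltn j u hu⟩,
          (Finset.mem_attachFin _).2 (Finset.mem_biUnion.2 ⟨j, hj, hu⟩)⟩
      · rw [hsum S, sum_attachFin (S.biUnion β) (hltB S) (p n)]
    have hχiff : ∀ S : Finset (Fin L),
        (χn n (S.biUnion β) = true ↔ (∑ j ∈ S, q j) ∈ F₁ n) := by
      intro S
      show (decide ((∑ i ∈ S.biUnion β, extend (p n) i) ∈ F₁ n) = true ↔ _)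
      rw [← hsum S, decide_eq_true_eq]
    rcases Bool.eq_false_or_eq_true t with ht | ht
    · subst ht
      apply hA n q hqpos
      rintro a ⟨S, hS, rfl⟩
      exact (hχiff S).1 (hmono S hS)
    · subst ht
      apply hB n q hqpos
      rintro a ⟨S, hS, rfl⟩
      have h1 := hmem S hS
      have h2 : χn n (S.biUnion β) = false := hmono S hS
      have h3 : (∑ j ∈ S, q j) ∉ F₁ n := by
        intro hmem1
        rw [(hχiff S).2 hmem1] at h2
        exact absurd h2 (by simp)
      rw [hcov n] at h1
      rcases h1 with h1 | h1
      · exact absurd h1 h3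
      · exact h1
  -- ultrafilter limit colouring
  set U : Ultrafilter ℕ := Ultrafilter.of Filter.atTop with hU
  set χ : Finset ℕ → Bool := fun α => decide ({n | χn n α = true} ∈ U) with hχ
  have hagree : ∀ α : Finset ℕ, {n | χn n α = χ α} ∈ U := by
    intro α
    by_cases h : {n | χn n α = true} ∈ U
    · have hχα : χ α = true := by simp [hχ, h]
      simpa [hχα] using h
    · have hχα : χ α = false := by simp [hχ, h]
      have hcomp : {n | χn n α = true}ᶜ ∈ U := Ultrafilter.compl_mem_iff_notMem.2 h
      have hset : {n | χn n α = false} = {n | χn n α = true}ᶜ := by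
        ext n; simp
      rw [hχα, hset]
      exact hcomp
  obtain ⟨t, β, hne, hdisj, hmono⟩ := exists_mono_union_family L χ
  set M : ℕ := (Finset.univ.biUnion β).sup id + 1 with hM
  have hMlt : ∀ j, ∀ u ∈ β j, u < M := by
    intro j u hu
    have : u ≤ (Finset.univ.biUnion β).sup id :=
      Finset.le_sup (f := id) (Finset.mem_biUnion.2 ⟨j, Finset.mem_univ j, hu⟩)
    omega
  have hG : ({n | M ≤ n} ∩
      ⋂ S : Finset (Fin L), {n | χn n (S.biUnion β) = χ (S.biUnion β)}) ∈ U := by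
    apply Filter.inter_mem
    · exact Ultrafilter.of_le Filter.atTop (Filter.mem_atTop M)
    · exact Filter.iInter_mem.2 fun S => hagree _
  obtain ⟨n, hn⟩ := Filter.nonempty_of_mem hG
  refine claim n ⟨β, t, hne, fun j u hu => lt_of_lt_of_le (hMlt j u hu) hn.1, hdisj, ?_⟩
  intro S hS
  have hagr : χn n (S.biUnion β) = χ (S.biUnion β) := Set.mem_iInter.1 hn.2 S
  rw [hagr]
  exact hmono S hS

end FipAux

/-- If a finite IP-set of length `n` is split into two pieces, then one of the pieces
contains a finite IP-set of length `l n`, where `l n → ∞` as `n → ∞`; consequently the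
family `F_fip` has the Ramsey property. -/
theorem fip_ramsey :
    (∃ l : ℕ → ℕ, Filter.Tendsto l Filter.atTop Filter.atTop ∧
      ∀ (n : ℕ) (p : Fin n → ℕ), (∀ i, 0 < p i) → ∀ F₁ F₂ : Set ℕ,
        FSfin p = F₁ ∪ F₂ →
          (∃ q : Fin (l n) → ℕ, (∀ i, 0 < q i) ∧ FSfin q ⊆ F₁) ∨
          (∃ q : Fin (l n) → ℕ, (∀ i, 0 < q i) ∧ FSfin q ⊆ F₂)) ∧
    (∀ F F₁ F₂ : Set ℕ, F ∈ Ffip → F = F₁ ∪ F₂ → F₁ ∈ Ffip ∨ F₂ ∈ Ffip) := by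
  classical
  choose N hN using FipAux.exists_good
  set Mf : ℕ → ℕ := fun L => (Finset.range (L+1)).sup N with hMf
  have hNM : ∀ L, N L ≤ Mf L := fun L =>
    Finset.le_sup (Finset.mem_range.2 (by omega))
  set l : ℕ → ℕ := fun n => Nat.findGreatest (fun L => Mf L ≤ n) n with hl
  have hgood : ∀ n, FipAux.Good (l n) n := by
    intro n
    rcases Nat.eq_zero_or_pos (l n) with h0 | h0
    · rw [h0]; exact FipAux.good_zero n
    · have hspec : Mf (l n) ≤ n := by
        have heq := Nat.findGreatest_eq_iff.1 (rfl : Nat.findGreatest (fun L => Mf L ≤ n) n = l n)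
        exact heq.2.1 (Nat.pos_iff_ne_zero.1 h0)
      exact FipAux.good_mono (le_trans (hNM _) hspec) (hN (l n))
  have htend : Filter.Tendsto l Filter.atTop Filter.atTop := by
    rw [Filter.tendsto_atTop_atTop]
    intro b
    refine ⟨max b (Mf b), fun a ha => ?_⟩
    have h1 : b ≤ a := le_trans (le_max_left _ _) ha
    have h2 : Mf b ≤ a := le_trans (le_max_right _ _) ha
    exact Nat.le_findGreatest h1 h2
  refine ⟨⟨l, htend, fun n p hp F₁ F₂ hcov => hgood n p hp F₁ F₂ hcov⟩, ?_⟩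
  intro F F₁ F₂ hF hsplit
  by_cases h₁ : F₁ ∈ Ffip
  · exact Or.inl h₁
  right
  intro m
  rw [Ffip, Set.mem_setOf_eq] at h₁
  push_neg at h₁
  obtain ⟨m₁, hm₁⟩ := h₁
  obtain ⟨n, hn⟩ : ∃ n, max m m₁ ≤ l n := by
    obtain ⟨i, hi⟩ := Filter.tendsto_atTop_atTop.1 htend (max m m₁)
    exact ⟨i, hi i le_rfl⟩
  obtain ⟨p, hp, hpF⟩ := hF n
  have hcov : FSfin p = (F₁ ∩ FSfin p) ∪ (F₂ ∩ FSfin p) := by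
    ext x
    constructor
    · intro hx
      have hx2 : x ∈ F₁ ∪ F₂ := by rw [← hsplit]; exact hpF hx
      rcases hx2 with h | h
      · exact Or.inl ⟨h, hx⟩
      · exact Or.inr ⟨h, hx⟩
    · rintro (⟨-, hx⟩ | ⟨-, hx⟩) <;> exact hx
  rcases hgood n p hp _ _ hcov with ⟨q, hq, hsub⟩ | ⟨q, hq, hsub⟩
  · exfalso
    have hmb : m₁ ≤ l n := le_trans (le_max_right _ _) hn
    exact hm₁ (fun i => q (Fin.castLE hmb i)) (fun i => hq _)
      (fun x hx => (hsub (FipAux.FSfin_castLE hmb q hx)).1)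
  · have hmb : m ≤ l n := le_trans (le_max_left _ _) hn
    exact ⟨fun i => q (Fin.castLE hmb i), fun i => hq _,
      fun x hx => (hsub (FipAux.FSfin_castLE hmb q hx)).1⟩
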